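/- Let T be the linear operator on ℝ² with the sup norm (ℓ∞²) determined by T(1,1) = (1,0) and T(1,-1) = (1/2, 1/2). Then T attains its norm at (1,1), the vector (1,1) is Birkhoff-James orthogonal to (-1/2, 1), but T(1,1) = (1,0) is not Birkhoff-James orthogonal to T(-1/2, 1) = (-1/8, -3/8). -/

import Mathlib

/-- Birkhoff-James orthogonality: `u ⊥_B v` iff `‖u + λ v‖ ≥ ‖u‖` for all real `λ`. -/
def BJOrth {E : Type*} [NormedAddCommGroup E] [NormedSpace ℝ E] (u v : E) : Prop :=
  ∀ l : ℝ, ‖u‖ ≤ ‖u + l • v‖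

lemma norm_fin2 (a b : ℝ) : ‖![a, b]‖ = max |a| |b| := by
  apply le_antisymm
  · apply pi_norm_le_iff_of_nonneg (le_max_iff.2 (Or.inl (abs_nonneg a))) |>.2
    intro i
    fin_cases i
    · simpa using le_max_left |a| |b|
    · simpa using le_max_right |a| |b|
  · apply max_le
    · simpa using norm_le_pi_norm ![a, b] 0
    · simpa using norm_le_pi_norm ![a, b] 1

lemma decomp (x : Fin 2 → ℝ) :
    x = ((x 0 + x 1)/2) • ![1, 1] + ((x 0 - x 1)/2) • ![1, -1] := by
  ext i
  fin_cases i <;> simp <;> ring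

theorem stmt12 (T : (Fin 2 → ℝ) →L[ℝ] (Fin 2 → ℝ))
    (hT1 : T ![1, 1] = ![1, 0])
    (hT2 : T ![1, -1] = ![1/2, 1/2]) :
    ‖T ![1, 1]‖ = ‖T‖ ∧ BJOrth ![(1:ℝ), 1] ![-1/2, 1] ∧
      ¬ BJOrth (T ![1, 1]) (T ![-1/2, 1]) := by
  have hTx : ∀ x : Fin 2 → ℝ, T x = ![((x 0 + x 1)/2) + ((x 0 - x 1)/2) * (1/2),
      ((x 0 - x 1)/2) * (1/2)] := by
    intro x
    have := decomp x
    rw [show T x = T (((x 0 + x 1)/2) • ![1, 1] + ((x 0 - x 1)/2) • ![1, -1]) by rw [← this]]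
    rw [map_add, map_smul, map_smul, hT1, hT2]
    ext i
    fin_cases i <;> simp <;> ring
  have h1 : ‖T ![1, 1]‖ = 1 := by
    rw [hT1, norm_fin2]; norm_num
  have hop : ‖T‖ = 1 := by
    apply le_antisymm
    · apply T.opNorm_le_bound zero_le_one
      intro x
      rw [hTx x, norm_fin2, one_mul]
      have h0 : |x 0| ≤ ‖x‖ := by simpa using norm_le_pi_norm x 0
      have h1 : |x 1| ≤ ‖x‖ := by simpa using norm_le_pi_norm x 1
      apply max_le
      · rw [abs_le]; constructor <;> [nlinarith [abs_le.1 h0, abs_le.1 h1];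
          nlinarith [abs_le.1 h0, abs_le.1 h1]]
      · rw [abs_le]; constructor <;> [nlinarith [abs_le.1 h0, abs_le.1 h1];
          nlinarith [abs_le.1 h0, abs_le.1 h1]]
    · have := T.le_opNorm ![1, 1]
      rw [h1, norm_fin2] at this
      simpa using this
  refine ⟨by rw [h1, hop], ?_, ?_⟩
  · intro l
    have hn1 : ‖![(1:ℝ), 1]‖ = 1 := by rw [norm_fin2]; norm_num
    have heq : ![(1:ℝ), 1] + l • ![-1/2, 1] = ![1 - l/2, 1 + l] := by
      ext i; fin_cases i <;> simp <;> ring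
    rw [hn1, heq, norm_fin2]
    rcases le_or_gt 0 l with h | h
    · exact le_max_of_le_right (by rw [abs_of_nonneg (by linarith)]; linarith)
    · exact le_max_of_le_left (by rw [abs_of_nonneg (by linarith)]; linarith)
  · intro hB
    have h2 : T ![-1/2, 1] = ![-1/8, -3/8] := by
      rw [hTx]; norm_num
    have := hB 1
    rw [hT1, h2] at this
    have heq : ![(1:ℝ), 0] + (1:ℝ) • ![-1/8, -3/8] = ![7/8, -3/8] := by
      ext i; fin_cases i <;> norm_num
    rw [heq, norm_fin2, norm_fin2] at this
    norm_num at this
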